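/- For λ ∈ (0,1) and α, t > 0, define C₀(t,λ) = (Γ((1-λ)αt)/Γ(αt))·(αt/e)^{λαt}·(1-λ)^{-(1-λ)αt}. Then C₀(t,λ) is decreasing in t on (0,∞). -/

import Mathlib

open Real MeasureTheory Set Filter Topology

namespace Stmt11

noncomputable def phi (y : ℝ) : ℝ := y⁻¹ - (Real.log (y + 1) - Real.log y)

noncomputable def B (s : ℝ) : ℝ := (1 - Real.exp (-s))⁻¹ - s⁻¹

noncomputable def K (s : ℝ) : ℝ := 1 - (1 - Real.exp (-s)) / s

noncomputable def F (x : ℝ) : ℝ := ∑' m : ℕ, phi (x + m)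

noncomputable def psi (x : ℝ) : ℝ := Real.log x - F x

noncomputable def g (x : ℝ) : ℝ := x * (psi x - Real.log x)

noncomputable def psiSeq (n : ℕ) (x : ℝ) : ℝ :=
  Real.log n - ∑ m ∈ Finset.range (n + 1), (x + m)⁻¹

lemma phi_pos {y : ℝ} (hy : 0 < y) : 0 < phi y := by
  have h1 : Real.log (y + 1) - Real.log y = Real.log ((y + 1) / y) := by
    rw [Real.log_div (by linarith) (by linarith)]
  have h2 : Real.log ((y + 1) / y) < (y + 1) / y - 1 :=
    Real.log_lt_sub_one_of_pos (by positivity) (by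
      intro h
      have := (div_eq_one_iff_eq (by linarith : y ≠ 0)).1 h
      linarith)
  have h3 : (y + 1) / y - 1 = y⁻¹ := by field_simp; ring
  rw [phi, h1]; linarith [h2.trans_eq h3]

lemma phi_le {y : ℝ} (hy : 0 < y) : phi y ≤ (y ^ 2)⁻¹ := by
  have h2 : Real.log (y / (y + 1)) ≤ y / (y + 1) - 1 :=
    Real.log_le_sub_one_of_pos (by positivity)
  have h1 : Real.log (y + 1) - Real.log y = -Real.log (y / (y + 1)) := by
    rw [Real.log_div (by linarith) (by linarith)]
    ring
  have h4 : phi y ≤ y⁻¹ + (y / (y + 1) - 1) := by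
    rw [phi, h1]; linarith
  have h5 : y⁻¹ + (y / (y + 1) - 1) ≤ (y ^ 2)⁻¹ := by
    have e1 : y⁻¹ + (y / (y + 1) - 1) = (y * (y + 1))⁻¹ := by
      field_simp
      ring
    rw [e1, inv_le_inv₀ (by positivity) (by positivity)]
    nlinarith
  linarith

lemma summable_aux {x : ℝ} (hx : 0 < x) : Summable (fun m : ℕ => ((x + m) ^ 2)⁻¹) := by
  have hbase : Summable (fun m : ℕ => (((m : ℝ) + 1) ^ 2)⁻¹) := by
    have h0 : Summable (fun n : ℕ => ((n : ℝ) ^ 2)⁻¹) := by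
      simpa using (Real.summable_one_div_nat_pow (p := 2)).2 (by norm_num)
    have := (summable_nat_add_iff (f := fun n : ℕ => ((n : ℝ) ^ 2)⁻¹) 1).2 h0
    apply this.congr
    intro m; push_cast; ring_nf
  set c := min x 1 with hc
  have hc0 : 0 < c := lt_min hx one_pos
  apply Summable.of_nonneg_of_le (fun m => by positivity)
    (f := fun m : ℕ => (c⁻¹)^2 * ((((m:ℝ) + 1)) ^ 2)⁻¹) _ (hbase.mul_left _)
  intro m
  have hcm : c * (m + 1) ≤ x + m := by
    have h1 : c ≤ x := min_le_left _ _
    have h2 : c ≤ 1 := min_le_right _ _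
    nlinarith [Nat.cast_nonneg (α := ℝ) m]
  have hxm : (0:ℝ) < x + m := by positivity
  calc ((x+m)^2)⁻¹ ≤ ((c * (m+1))^2)⁻¹ := by
        rw [inv_le_inv₀ (by positivity) (by positivity)]
        have h2 := mul_le_mul hcm hcm (by positivity) hxm.le
        nlinarith
    _ = (c⁻¹)^2 * ((((m:ℝ)+1)) ^ 2)⁻¹ := by
        rw [mul_pow, mul_inv, inv_pow]

lemma summable_phi {x : ℝ} (hx : 0 < x) : Summable (fun m : ℕ => phi (x + m)) := by
  refine Summable.of_nonneg_of_le (fun m => ?_) (fun m => ?_) (summable_aux hx)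
  · exact (phi_pos (by positivity : (0:ℝ) < x + m)).le
  · exact phi_le (by positivity : (0:ℝ) < x + m)

lemma sum_phi_eq {x : ℝ} (hx : 0 < x) (n : ℕ) :
    ∑ m ∈ Finset.range n, phi (x + m)
      = (∑ m ∈ Finset.range n, (x + m)⁻¹) - Real.log (x + n) + Real.log x := by
  induction n with
  | zero => simp
  | succ n ih =>
    rw [Finset.sum_range_succ, Finset.sum_range_succ, ih, phi]
    push_cast
    rw [show x + (↑n + 1) = x + ↑n + 1 by ring]
    ring


lemma tendsto_log_ratio {x : ℝ} (hx : 0 < x) :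
    Tendsto (fun n : ℕ => Real.log n - Real.log (x + n + 1)) atTop (𝓝 0) := by
  have h1 : Tendsto (fun n : ℕ => (n : ℝ) / (n + (x + 1))) atTop (𝓝 1) :=
    tendsto_natCast_div_add_atTop (x + 1)
  have h2 : Tendsto (fun n : ℕ => Real.log ((n : ℝ) / (n + (x + 1)))) atTop (𝓝 0) := by
    have := ((Real.continuousAt_log one_ne_zero).tendsto).comp h1
    simpa [Function.comp_def] using this
  apply h2.congr'
  filter_upwards [eventually_ge_atTop 1] with n hn
  have hn0 : (0:ℝ) < n := by exact_mod_cast hn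
  rw [show (n:ℝ) + (x + 1) = x + n + 1 by ring,
    Real.log_div (by positivity) (by positivity)]

lemma F_tail {x : ℝ} (hx : 0 < x) (n : ℕ) :
    F x = ∑ m ∈ Finset.range n, phi (x + m) + ∑' m : ℕ, phi (x + ↑(m + n)) := by
  rw [F, ← (summable_phi hx).sum_add_tsum_nat_add n]

lemma psiSeq_sub_psi {x : ℝ} (hx : 0 < x) (n : ℕ) :
    psiSeq n x - psi x
      = (Real.log n - Real.log (x + n + 1)) + ∑' m : ℕ, phi (x + ↑(m + (n + 1))) := by
  have h1 := F_tail hx (n + 1)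
  have h2 := sum_phi_eq hx (n + 1)
  rw [psiSeq, psi, h1, h2]
  push_cast
  ring

lemma tendsto_psiSeq {x : ℝ} (hx : 0 < x) :
    Tendsto (fun n : ℕ => psiSeq n x) atTop (𝓝 (psi x)) := by
  have h0 : Tendsto (fun n : ℕ => psiSeq n x - psi x) atTop (𝓝 0) := by
    have hA := tendsto_log_ratio hx
    have hB : Tendsto (fun n : ℕ => ∑' m : ℕ, phi (x + ↑(m + (n+1)))) atTop (𝓝 0) := by
      exact (tendsto_sum_nat_add (fun m : ℕ => phi (x + m))).comp (tendsto_add_atTop_nat 1)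
    have := hA.add hB
    rw [add_zero] at this
    exact this.congr (fun n => (psiSeq_sub_psi hx n).symm)
  have := h0.add_const (psi x)
  simpa using this

lemma tail_le {r x : ℝ} (hr : 0 < r) (hrx : r ≤ x) (n : ℕ) :
    ∑' m : ℕ, phi (x + ↑(m + (n+1))) ≤ ∑' m : ℕ, ((r + ↑(m + (n+1))) ^ 2)⁻¹ := by
  have hx : 0 < x := lt_of_lt_of_le hr hrx
  have hsum1 : Summable (fun m : ℕ => phi (x + ↑(m + (n+1)))) :=
    ((summable_nat_add_iff (n+1)).2 (summable_phi hx)).congr (fun m => by push_cast; ring_nf)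
  have hsum2 : Summable (fun m : ℕ => ((r + ↑(m + (n+1))) ^ 2)⁻¹) :=
    ((summable_nat_add_iff (n+1)).2 (summable_aux hr)).congr (fun m => by push_cast; ring_nf)
  apply Summable.tsum_le_tsum _ hsum1 hsum2
  intro m
  have h1 : (0:ℝ) < x + ↑(m + (n+1)) := by positivity
  refine (phi_le h1).trans ?_
  rw [inv_le_inv₀ (by positivity) (by positivity)]
  have : r + ↑(m + (n+1)) ≤ x + ↑(m + (n+1)) := by linarith
  nlinarith [Nat.cast_nonneg (α := ℝ) (m + (n+1))]

lemma tail_tendsto {r : ℝ} (hr : 0 < r) :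
    Tendsto (fun n : ℕ => ∑' m : ℕ, ((r + ↑(m + (n+1))) ^ 2)⁻¹) atTop (𝓝 0) :=
  (tendsto_sum_nat_add (fun m : ℕ => ((r + m) ^ 2)⁻¹)).comp (tendsto_add_atTop_nat 1)

lemma tlu : TendstoLocallyUniformlyOn psiSeq psi atTop (Ioi 0) := by
  rw [tendstoLocallyUniformlyOn_iff_forall_isCompact isOpen_Ioi]
  intro S hS hSc
  rcases S.eq_empty_or_nonempty with rfl | hne
  · simp [TendstoUniformlyOn]
  obtain ⟨r, hrS, hr⟩ := hSc.exists_isLeast hne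
  obtain ⟨R, hRS, hR⟩ := hSc.exists_isGreatest hne
  have hr0 : 0 < r := hS hrS
  rw [Metric.tendstoUniformlyOn_iff]
  have key : ∀ n : ℕ, 1 ≤ n → ∀ x ∈ S,
      dist (psi x) (psiSeq n x) ≤ (R + 1) / n + ∑' m : ℕ, ((r + ↑(m + (n+1))) ^ 2)⁻¹ := by
    intro n hn x hxS
    have hx : 0 < x := hS hxS
    have hxR : x ≤ R := hR hxS
    have hrx : r ≤ x := hr hxS
    have hn0 : (0:ℝ) < n := by exact_mod_cast hn
    rw [dist_comm, Real.dist_eq, psiSeq_sub_psi hx n]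
    have htail0 : 0 ≤ ∑' m : ℕ, phi (x + ↑(m + (n+1))) := by
      apply tsum_nonneg; intro m
      exact (phi_pos (by positivity)).le
    have htail := tail_le hr0 hrx n
    have hlog1 : Real.log n - Real.log (x + n + 1) ≤ 0 := by
      have : Real.log n ≤ Real.log (x + n + 1) :=
        Real.log_le_log (by positivity) (by linarith)
      linarith
    have hlog2 : Real.log (x + n + 1) - Real.log n ≤ (R + 1) / n := by
      rw [← Real.log_div (by positivity) (by positivity)]
      have h2 : (x + n + 1) / n = 1 + (x + 1)/n := by field_simp; ring
      rw [h2]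
      have h3 : Real.log (1 + (x+1)/n) ≤ (x+1)/n := by
        have := Real.log_le_sub_one_of_pos (x := 1 + (x+1)/n) (by positivity)
        linarith
      refine h3.trans ?_
      gcongr

    rw [abs_le]
    constructor
    · have : -((R + 1) / n) ≤ Real.log ↑n - Real.log (x + ↑n + 1) := by linarith
      have h5 : (0:ℝ) ≤ ∑' m : ℕ, ((r + ↑(m + (n+1))) ^ 2)⁻¹ :=
        tsum_nonneg (fun m => by positivity)
      linarith
    · have h6 : (0:ℝ) ≤ (R+1)/n := div_nonneg (by linarith) (by positivity)
      linarith
  intro ε hε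
  have hbound : Tendsto (fun n : ℕ => (R + 1) / n + ∑' m : ℕ, ((r + ↑(m + (n+1))) ^ 2)⁻¹)
      atTop (𝓝 0) := by
    have h1 : Tendsto (fun n : ℕ => (R + 1) / n) atTop (𝓝 0) :=
      tendsto_const_nhds.div_atTop tendsto_natCast_atTop_atTop
    simpa using h1.add (tail_tendsto hr0)
  have := hbound.eventually (eventually_lt_nhds hε)
  filter_upwards [this, eventually_ge_atTop 1] with n h1 h2 x hxS
  exact lt_of_le_of_lt (key n h2 x hxS) h1

lemma hasDerivAt_logGammaSeq {x : ℝ} (hx : 0 < x) (n : ℕ) :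
    HasDerivAt (fun y => Real.BohrMollerup.logGammaSeq y n) (psiSeq n x) x := by
  have h1 : ∀ m ∈ Finset.range (n+1),
      HasDerivAt (fun y : ℝ => Real.log (y + m)) ((x + m)⁻¹) x := by
    intro m _
    have hne : x + (m:ℝ) ≠ 0 := by positivity
    have := ((hasDerivAt_id x).add_const (m:ℝ)).log hne
    simpa using this
  have h2 : HasDerivAt (fun y : ℝ => ∑ m ∈ Finset.range (n+1), Real.log (y + m))
      (∑ m ∈ Finset.range (n+1), (x + m)⁻¹) x := HasDerivAt.fun_sum h1
  have h3 : HasDerivAt (fun y : ℝ => y * Real.log n + Real.log (Nat.factorial n))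
      (Real.log n) x := by
    simpa using (hasDerivAt_mul_const (Real.log n)).add_const (Real.log (Nat.factorial n))
  have := h3.fun_sub h2
  simpa [Real.BohrMollerup.logGammaSeq, psiSeq, sub_eq_add_neg] using this

lemma hasDerivAt_logGamma {x : ℝ} (hx : 0 < x) :
    HasDerivAt (fun y => Real.log (Real.Gamma y)) (psi x) x := by
  apply hasDerivAt_of_tendstoLocallyUniformlyOn isOpen_Ioi tlu
    (f := fun n y => Real.BohrMollerup.logGammaSeq y n)
  · filter_upwards with n y hy
    exact hasDerivAt_logGammaSeq hy n
  · intro y hy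
    exact Real.BohrMollerup.tendsto_log_gamma hy
  · exact hx

lemma exp_integrable {y : ℝ} (hy : 0 < y) :
    IntegrableOn (fun s : ℝ => Real.exp (-(y * s))) (Ioi (0:ℝ)) := by
  have := exp_neg_integrableOn_Ioi 0 hy
  simpa [neg_mul] using this

lemma integral_exp_neg {y : ℝ} (hy : 0 < y) :
    ∫ s in Ioi (0:ℝ), Real.exp (-(y * s)) = y⁻¹ := by
  have h := Real.integral_rpow_mul_exp_neg_mul_Ioi (a := 1) one_pos hy
  simp only [sub_self, Real.rpow_zero, one_mul, Real.rpow_one, Real.Gamma_one, mul_one,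
    one_div] at h
  exact h

lemma inner_interval {y s : ℝ} (hs : 0 < s) (hy : 0 < y) :
    ∫ u in Ioc y (y+1), Real.exp (-(u * s))
      = (Real.exp (-(y*s)) - Real.exp (-((y+1)*s))) / s := by
  rw [← intervalIntegral.integral_of_le (by linarith : y ≤ y + 1)]
  have hderiv : ∀ u ∈ Set.uIcc y (y+1),
      HasDerivAt (fun u : ℝ => -(Real.exp (-(u*s)) / s)) (Real.exp (-(u*s))) u := by
    intro u _
    have h1 : HasDerivAt (fun u : ℝ => -(u*s)) (-s) u := (hasDerivAt_mul_const s).neg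
    have h2 := (h1.exp.div_const s).neg
    refine h2.congr_deriv ?_
    field_simp
  rw [intervalIntegral.integral_eq_sub_of_hasDerivAt hderiv
    ((Real.continuous_exp.comp (by continuity)).intervalIntegrable _ _)]
  field_simp
  ring

lemma frullani_aux {y : ℝ} (hy : 0 < y) :
    IntegrableOn (fun s : ℝ => (Real.exp (-(y*s)) - Real.exp (-((y+1)*s))) / s) (Ioi (0:ℝ))
    ∧ ∫ s in Ioi (0:ℝ), (Real.exp (-(y*s)) - Real.exp (-((y+1)*s))) / s
        = Real.log (y+1) - Real.log y := by
  set μ := volume.restrict (Ioi (0:ℝ)) with hμ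
  set ν := volume.restrict (Ioc y (y+1)) with hν
  have hcont : Continuous (fun p : ℝ × ℝ => Real.exp (-(p.2 * p.1))) := by
    apply Real.continuous_exp.comp; continuity
  have hint : Integrable (Function.uncurry fun s u : ℝ => Real.exp (-(u * s))) (μ.prod ν) := by
    apply Integrable.mono' (g := fun p : ℝ × ℝ => Real.exp (-(y * p.1)) * 1)
    · exact Integrable.mul_prod (exp_integrable hy)
        (integrableOn_const measure_Ioc_lt_top.ne)
    · exact hcont.aestronglyMeasurable
    · rw [hμ, hν, Measure.prod_restrict]
      filter_upwards [ae_restrict_mem (measurableSet_Ioi.prod measurableSet_Ioc)] with p hp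
      simp only [Function.uncurry, Real.norm_eq_abs, Real.abs_exp, mul_one]
      apply Real.exp_le_exp.2
      have h1 : 0 < p.1 := hp.1
      have h2 : y < p.2 := hp.2.1
      nlinarith
  have swap := integral_integral_swap hint
  have hIL : IntegrableOn
      (fun s : ℝ => (Real.exp (-(y*s)) - Real.exp (-((y+1)*s))) / s) (Ioi (0:ℝ)) := by
    have h1 : Integrable (fun s => ∫ u, Real.exp (-(u * s)) ∂ν) μ :=
      hint.integral_prod_left
    apply h1.congr
    filter_upwards [ae_restrict_mem measurableSet_Ioi] with s hs
    rw [hν, ← inner_interval hs hy]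
  refine ⟨hIL, ?_⟩
  have hL : ∫ s, (∫ u, Real.exp (-(u * s)) ∂ν) ∂μ
      = ∫ s in Ioi (0:ℝ), (Real.exp (-(y*s)) - Real.exp (-((y+1)*s))) / s := by
    apply integral_congr_ae
    filter_upwards [ae_restrict_mem measurableSet_Ioi] with s hs
    rw [hν, inner_interval hs hy]
  have hR : ∫ u, (∫ s, Real.exp (-(u * s)) ∂μ) ∂ν = Real.log (y+1) - Real.log y := by
    have h1 : ∫ u, (∫ s, Real.exp (-(u * s)) ∂μ) ∂ν = ∫ u in Ioc y (y+1), u⁻¹ := by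
      apply integral_congr_ae
      filter_upwards [ae_restrict_mem measurableSet_Ioc] with u hu
      rw [hμ]
      exact integral_exp_neg (by linarith [hu.1] : 0 < u)
    rw [h1, ← intervalIntegral.integral_of_le (by linarith : y ≤ y + 1),
      integral_inv (Set.notMem_uIcc_of_lt hy (by linarith)),
      Real.log_div (by linarith) (by linarith)]
  rw [← hL, swap, hR]

lemma one_sub_exp_pos {s : ℝ} (hs : 0 < s) : 0 < 1 - Real.exp (-s) := by
  have : Real.exp (-s) < 1 := Real.exp_lt_one_iff.2 (by linarith)
  linarith

lemma one_sub_exp_lt {s : ℝ} (hs : 0 < s) : 1 - Real.exp (-s) < s := by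
  have := Real.add_one_lt_exp (x := -s) (by linarith)
  linarith

lemma K_nonneg {s : ℝ} (hs : 0 < s) : 0 ≤ K s := by
  rw [K, sub_nonneg, div_le_one hs]
  exact (one_sub_exp_lt hs).le

lemma K_le_one {s : ℝ} (hs : 0 < s) : K s ≤ 1 := by
  rw [K]
  have h1 : 0 ≤ (1 - Real.exp (-s)) / s := div_nonneg (one_sub_exp_pos hs).le hs.le
  linarith

lemma K_continuousOn : ContinuousOn K (Ioi (0:ℝ)) := by
  apply continuousOn_const.sub
  exact (continuousOn_const.sub (Real.continuous_exp.comp continuous_neg).continuousOn).div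
    continuousOn_id (fun s hs => ne_of_gt hs)

lemma K_pointwise {y s : ℝ} (hs : 0 < s) :
    Real.exp (-(y*s)) - (Real.exp (-(y*s)) - Real.exp (-((y+1)*s))) / s
      = Real.exp (-(y*s)) * K s := by
  have hs0 : (s:ℝ) ≠ 0 := ne_of_gt hs
  have hexp : Real.exp (-((y+1)*s)) = Real.exp (-(y*s)) * Real.exp (-s) := by
    rw [← Real.exp_add]; ring_nf
  rw [K, hexp]
  field_simp

lemma phi_integrable {y : ℝ} (hy : 0 < y) :
    IntegrableOn (fun s : ℝ => Real.exp (-(y*s)) * K s) (Ioi (0:ℝ)) := by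
  have h := (exp_integrable hy).sub (frullani_aux hy).1
  apply h.congr
  filter_upwards [ae_restrict_mem measurableSet_Ioi] with s hs
  exact K_pointwise hs

lemma phi_integral {y : ℝ} (hy : 0 < y) :
    phi y = ∫ s in Ioi (0:ℝ), Real.exp (-(y*s)) * K s := by
  have heq : ∀ s ∈ Ioi (0:ℝ), Real.exp (-(y*s)) * K s
      = Real.exp (-(y*s)) - (Real.exp (-(y*s)) - Real.exp (-((y+1)*s))) / s :=
    fun s hs => (K_pointwise (mem_Ioi.1 hs)).symm
  rw [setIntegral_congr_fun measurableSet_Ioi heq,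
    integral_sub (exp_integrable hy) (frullani_aux hy).1,
    integral_exp_neg hy, (frullani_aux hy).2, phi]

lemma geom_eq {x s : ℝ} (hx : 0 < x) (hs : 0 < s) :
    ∑' m : ℕ, Real.exp (-((x + m) * s)) * K s = Real.exp (-(x*s)) * B s := by
  have h1 : ∀ m : ℕ, Real.exp (-((x + m) * s)) * K s
      = (Real.exp (-(x*s)) * K s) * (Real.exp (-s)) ^ m := by
    intro m
    have harg : -((x + (m:ℝ)) * s) = -(x*s) + (m:ℝ) * (-s) := by ring
    rw [harg, Real.exp_add, Real.exp_nat_mul]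
    ring
  rw [tsum_congr h1, tsum_mul_left, tsum_geometric_of_lt_one (Real.exp_nonneg _)
    (Real.exp_lt_one_iff.2 (by linarith))]
  have hne : 1 - Real.exp (-s) ≠ 0 := ne_of_gt (one_sub_exp_pos hs)
  have hKB : K s * (1 - Real.exp (-s))⁻¹ = B s := by
    rw [K, B]
    field_simp
  rw [mul_assoc, hKB]

lemma B_nonneg {s : ℝ} (hs : 0 < s) : 0 ≤ B s := by
  rw [B, sub_nonneg]
  exact inv_anti₀ (one_sub_exp_pos hs) (one_sub_exp_lt hs).le

lemma B_le_one {s : ℝ} (hs : 0 < s) : B s ≤ 1 := by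
  rw [B]
  have h1 : 0 < 1 - Real.exp (-s) := one_sub_exp_pos hs
  have h2 : s + 1 < Real.exp s := Real.add_one_lt_exp (ne_of_gt hs)
  have h3 : Real.exp (-s) = (Real.exp s)⁻¹ := Real.exp_neg s
  have h4 : 0 < Real.exp s := Real.exp_pos s
  have hs0 : s ≠ 0 := ne_of_gt hs
  rw [h3] at h1 ⊢
  rw [sub_le_iff_le_add]
  have hE1 : (0:ℝ) < Real.exp s - 1 := by nlinarith
  have h5 : (1 - (Real.exp s)⁻¹)⁻¹ = Real.exp s / (Real.exp s - 1) := by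
    rw [show 1 - (Real.exp s)⁻¹ = (Real.exp s - 1)/Real.exp s by field_simp, inv_div]
  rw [h5, div_le_iff₀ hE1]
  have h7 : (1:ℝ) ≤ s⁻¹ * (Real.exp s - 1) := by
    rw [inv_mul_eq_div, le_div_iff₀ hs]
    linarith
  nlinarith

lemma F_integral {x : ℝ} (hx : 0 < x) :
    F x = ∫ s in Ioi (0:ℝ), Real.exp (-(x*s)) * B s := by
  set f : ℕ → ℝ → ℝ := fun m s => Real.exp (-((x + m)*s)) * K s with hf
  have hxm : ∀ m : ℕ, (0:ℝ) < x + m := fun m => by positivity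
  have hmeas : ∀ m : ℕ, AEStronglyMeasurable (f m) (volume.restrict (Ioi (0:ℝ))) := by
    intro m
    apply ContinuousOn.aestronglyMeasurable _ measurableSet_Ioi
    exact ((Real.continuous_exp.comp (by continuity)).continuousOn).mul K_continuousOn
  have hnn : ∀ m : ℕ, 0 ≤ᵐ[volume.restrict (Ioi (0:ℝ))] f m := by
    intro m
    filter_upwards [ae_restrict_mem measurableSet_Ioi] with s hs
    exact mul_nonneg (Real.exp_nonneg _) (K_nonneg hs)
  have hlint : ∀ m : ℕ, ∫⁻ s, ‖f m s‖ₑ ∂(volume.restrict (Ioi (0:ℝ)))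
      = ENNReal.ofReal (phi (x + m)) := by
    intro m
    rw [phi_integral (hxm m),
      ofReal_integral_eq_lintegral_ofReal (phi_integrable (hxm m)) (hnn m)]
    apply lintegral_congr_ae
    filter_upwards [hnn m] with s hs
    rw [← Real.enorm_eq_ofReal hs]
  have hsum := integral_tsum hmeas (by
    rw [tsum_congr hlint,
      ← ENNReal.ofReal_tsum_of_nonneg (fun m => (phi_pos (hxm m)).le) (summable_phi hx)]
    exact ENNReal.ofReal_ne_top)
  have h1 : F x = ∑' m : ℕ, ∫ s, f m s ∂(volume.restrict (Ioi (0:ℝ))) := by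
    apply tsum_congr
    intro m
    exact phi_integral (hxm m)
  rw [h1, ← hsum]
  apply integral_congr_ae
  filter_upwards [ae_restrict_mem measurableSet_Ioi] with s hs
  exact geom_eq hx hs

lemma B_hasDerivAt {s : ℝ} (hs : 0 < s) :
    HasDerivAt B ((s^2)⁻¹ - Real.exp (-s) / (1 - Real.exp (-s))^2) s := by
  have h1 : HasDerivAt (fun t : ℝ => 1 - Real.exp (-t)) (Real.exp (-s)) s := by
    have := ((hasDerivAt_neg s).exp).const_sub 1
    simpa using this
  have h2 := h1.inv (ne_of_gt (one_sub_exp_pos hs))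
  have h3 := hasDerivAt_inv (ne_of_gt hs)
  have h4 := h2.fun_sub h3
  refine h4.congr_deriv ?_
  rw [div_eq_mul_inv]
  ring

lemma sinh_ineq {s : ℝ} (hs : 0 < s) : Real.exp (-s) * s^2 < (1 - Real.exp (-s))^2 := by
  set u := s / 2 with hu
  have hu0 : 0 < u := by positivity
  have hsinh : u < Real.sinh u := Real.self_lt_sinh_iff.2 hu0
  have hsinh_eq : Real.sinh u = (Real.exp u - Real.exp (-u)) / 2 := Real.sinh_eq u
  have hkey : Real.exp (-u) * s < 1 - Real.exp (-s) := by
    have h1 : Real.exp (-u) * (Real.exp u - Real.exp (-u)) = 1 - Real.exp (-s) := by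
      rw [mul_sub, ← Real.exp_add, ← Real.exp_add]
      norm_num
      rw [show -u + -u = -s by rw [hu]; ring]
    rw [← h1]
    have : s < Real.exp u - Real.exp (-u) := by
      rw [hsinh_eq] at hsinh
      rw [hu] at *
      linarith
    exact mul_lt_mul_of_pos_left this (Real.exp_pos _)
  have hL : 0 ≤ Real.exp (-u) * s := by positivity
  have := mul_self_lt_mul_self hL hkey
  calc Real.exp (-s) * s^2 = (Real.exp (-u) * s) * (Real.exp (-u) * s) := by
        rw [show Real.exp (-u) * s * (Real.exp (-u) * s)
            = (Real.exp (-u) * Real.exp (-u)) * s^2 by ring, ← Real.exp_add,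
          show -u + -u = -s by rw [hu]; ring]
    _ < (1 - Real.exp (-s)) * (1 - Real.exp (-s)) := this
    _ = (1 - Real.exp (-s))^2 := by ring

lemma B_deriv_pos {s : ℝ} (hs : 0 < s) :
    0 < (s^2)⁻¹ - Real.exp (-s) / (1 - Real.exp (-s))^2 := by
  have h1 := one_sub_exp_pos hs
  rw [sub_pos, div_lt_iff₀ (by positivity), inv_mul_eq_div, lt_div_iff₀ (by positivity)]
  exact sinh_ineq hs

lemma B_strictMono : StrictMonoOn B (Ioi (0:ℝ)) := by
  apply strictMonoOn_of_deriv_pos (convex_Ioi 0)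
  · intro s hs
    exact (B_hasDerivAt hs).continuousAt.continuousWithinAt
  · intro s hs
    rw [interior_Ioi] at hs
    rw [(B_hasDerivAt hs).deriv]
    exact B_deriv_pos hs

lemma Gx_integrable {x : ℝ} (hx : 0 < x) :
    IntegrableOn (fun w : ℝ => Real.exp (-w) * B (w / x)) (Ioi (0:ℝ)) := by
  apply Integrable.mono' (g := fun w : ℝ => Real.exp (-(1 * w))) (exp_integrable one_pos)
  · apply ContinuousOn.aestronglyMeasurable _ measurableSet_Ioi
    apply (Real.continuous_exp.comp continuous_neg).continuousOn.mul
    have hB : ContinuousOn B (Ioi (0:ℝ)) :=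
      fun s hs => (B_hasDerivAt hs).continuousAt.continuousWithinAt
    apply hB.comp (continuousOn_id.div_const x)
    intro w hw
    exact mem_Ioi.2 (div_pos hw hx)
  · filter_upwards [ae_restrict_mem measurableSet_Ioi] with w hw
    have hwx : 0 < w / x := div_pos hw hx
    rw [Real.norm_eq_abs, abs_mul, Real.abs_exp, abs_of_nonneg (B_nonneg hwx), one_mul]
    calc Real.exp (-w) * B (w/x) ≤ Real.exp (-w) * 1 :=
          mul_le_mul_of_nonneg_left (B_le_one hwx) (Real.exp_nonneg _)
      _ = Real.exp (-w) := mul_one _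

lemma g_eq {x : ℝ} (hx : 0 < x) :
    g x = -∫ w in Ioi (0:ℝ), Real.exp (-w) * B (w / x) := by
  have hsub := MeasureTheory.integral_comp_mul_left_Ioi
    (fun w => Real.exp (-w) * B (w / x)) 0 hx
  rw [mul_zero] at hsub
  have heq : ∀ s ∈ Ioi (0:ℝ), Real.exp (-(x * s)) * B ((x * s) / x)
      = Real.exp (-(x*s)) * B s := by
    intro s hs
    rw [mul_div_cancel_left₀ _ (ne_of_gt hx)]
  rw [setIntegral_congr_fun measurableSet_Ioi heq] at hsub
  have : g x = -(x * F x) := by rw [g, psi]; ring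
  rw [this, F_integral hx, hsub, smul_eq_mul]
  field_simp

lemma g_strictMonoOn : StrictMonoOn g (Ioi (0:ℝ)) := by
  intro p hp q hq hpq
  rw [mem_Ioi] at hp hq
  rw [g_eq hp, g_eq hq, neg_lt_neg_iff]
  have hI1 := Gx_integrable hp
  have hI2 := Gx_integrable hq
  have hdiff : 0 < ∫ w in Ioi (0:ℝ),
      (Real.exp (-w) * B (w / p) - Real.exp (-w) * B (w / q)) := by
    have hpos : ∀ w ∈ Ioi (0:ℝ),
        0 < Real.exp (-w) * B (w / p) - Real.exp (-w) * B (w / q) := by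
      intro w hw
      rw [mem_Ioi] at hw
      have h1 : w / q < w / p := div_lt_div_of_pos_left hw hp hpq
      have h2 : 0 < w / q := div_pos hw hq
      have h3 := B_strictMono (mem_Ioi.2 h2) (mem_Ioi.2 (h2.trans h1)) h1
      have := Real.exp_pos (-w)
      nlinarith
    have hnn : 0 ≤ᶠ[ae (volume.restrict (Ioi (0:ℝ)))]
        fun w => Real.exp (-w) * B (w / p) - Real.exp (-w) * B (w / q) := by
      filter_upwards [ae_restrict_mem measurableSet_Ioi] with w hw
      exact (hpos w hw).le
    rw [setIntegral_pos_iff_support_of_nonneg_ae hnn (hI1.sub hI2)]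
    have hsub : Ioi (0:ℝ) ⊆ Function.support
        (fun w => Real.exp (-w) * B (w / p) - Real.exp (-w) * B (w / q)) := by
      intro w hw
      exact ne_of_gt (hpos w hw)
    rw [inter_eq_right.2 hsub, Real.volume_Ioi]
    exact ENNReal.zero_lt_top
  rw [integral_sub hI1 hI2] at hdiff
  linarith

lemma L_hasDerivAt {l α t : ℝ} (hl0 : 0 < l) (hl1 : l < 1) (hα : 0 < α) (ht : 0 < t) :
    HasDerivAt (fun t => Real.log (Real.Gamma ((1-l)*α*t)) - Real.log (Real.Gamma (α*t))
        + (l*α*t)*(Real.log (α*t) - 1) - ((1-l)*α*t)*Real.log (1-l))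
      ((1-l)*α * psi ((1-l)*α*t) - α * psi (α*t) + l*α*Real.log (α*t)
        - (1-l)*α*Real.log (1-l)) t := by
  have hl' : 0 < 1 - l := by linarith
  have hb : 0 < (1-l)*α := mul_pos hl' hα
  have hbt : 0 < (1-l)*α*t := mul_pos hb ht
  have hat : 0 < α*t := mul_pos hα ht
  have hmb : HasDerivAt (fun y : ℝ => (1-l)*α*y) ((1-l)*α) t := by
    simpa using (hasDerivAt_id t).const_mul ((1-l)*α)
  have hma : HasDerivAt (fun y : ℝ => α*y) α t := by
    simpa using (hasDerivAt_id t).const_mul α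
  have hc1 : HasDerivAt (fun y : ℝ => Real.log (Real.Gamma ((1-l)*α*y)))
      (psi ((1-l)*α*t) * ((1-l)*α)) t := by
    have := (hasDerivAt_logGamma hbt).comp t hmb
    simpa [Function.comp_def] using this
  have hc2 : HasDerivAt (fun y : ℝ => Real.log (Real.Gamma (α*y))) (psi (α*t) * α) t := by
    have := (hasDerivAt_logGamma hat).comp t hma
    simpa [Function.comp_def] using this
  have hlog : HasDerivAt (fun y : ℝ => Real.log (α*y)) (α/(α*t)) t := hma.log (ne_of_gt hat)
  have hu : HasDerivAt (fun y : ℝ => l*α*y) (l*α) t := by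
    simpa using (hasDerivAt_id t).const_mul (l*α)
  have h3 : HasDerivAt (fun y : ℝ => (l*α*y)*(Real.log (α*y) - 1))
      ((l*α)*(Real.log (α*t) - 1) + (l*α*t)*(α/(α*t))) t := hu.mul (hlog.sub_const 1)
  have h4 : HasDerivAt (fun y : ℝ => ((1-l)*α*y)*Real.log (1-l))
      ((1-l)*α*Real.log (1-l)) t := by
    simpa using hmb.mul_const (Real.log (1-l))
  have htot := ((hc1.fun_sub hc2).fun_add h3).fun_sub h4
  refine htot.congr_deriv ?_
  have hαt : α * t ≠ 0 := ne_of_gt hat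
  field_simp
  ring

theorem stmt11' (l α : ℝ) (hl : l ∈ Set.Ioo (0:ℝ) 1) (hα : 0 < α) :
    StrictAntiOn (fun t => Real.Gamma ((1-l)*α*t)/Real.Gamma (α*t)
        * (α*t/Real.exp 1) ^ (l*α*t) * (1-l) ^ (-((1-l)*α*t)))
      (Set.Ioi 0) := by
  obtain ⟨hl0, hl1⟩ := hl
  have hl' : 0 < 1 - l := by linarith
  set L : ℝ → ℝ := fun t => Real.log (Real.Gamma ((1-l)*α*t)) - Real.log (Real.Gamma (α*t))
      + (l*α*t)*(Real.log (α*t) - 1) - ((1-l)*α*t)*Real.log (1-l) with hL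
  have hfeq : ∀ t ∈ Set.Ioi (0:ℝ), Real.Gamma ((1-l)*α*t)/Real.Gamma (α*t)
      * (α*t/Real.exp 1) ^ (l*α*t) * (1-l) ^ (-((1-l)*α*t)) = Real.exp (L t) := by
    intro t ht
    rw [mem_Ioi] at ht
    have hbt : 0 < (1-l)*α*t := mul_pos (mul_pos hl' hα) ht
    have hat : 0 < α*t := mul_pos hα ht
    have hG1 : 0 < Real.Gamma ((1-l)*α*t) := Real.Gamma_pos_of_pos hbt
    have hG2 : 0 < Real.Gamma (α*t) := Real.Gamma_pos_of_pos hat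
    have e1 : (α*t/Real.exp 1) ^ (l*α*t) = Real.exp ((l*α*t)*(Real.log (α*t) - 1)) := by
      rw [Real.rpow_def_of_pos (by positivity), Real.log_div (ne_of_gt hat) (Real.exp_ne_zero 1),
        Real.log_exp]
      congr 1
      ring
    have e2 : (1-l) ^ (-((1-l)*α*t)) = Real.exp (-(((1-l)*α*t)*Real.log (1-l))) := by
      rw [Real.rpow_def_of_pos hl']
      ring_nf
    have e3 : Real.Gamma ((1-l)*α*t)/Real.Gamma (α*t)
        = Real.exp (Real.log (Real.Gamma ((1-l)*α*t)) - Real.log (Real.Gamma (α*t))) := by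
      rw [Real.exp_sub, Real.exp_log hG1, Real.exp_log hG2]
    rw [e1, e2, e3, ← Real.exp_add, ← Real.exp_add, hL]
    ring_nf
  have hDneg : ∀ t ∈ Set.Ioi (0:ℝ),
      (1-l)*α * psi ((1-l)*α*t) - α * psi (α*t) + l*α*Real.log (α*t)
        - (1-l)*α*Real.log (1-l) < 0 := by
    intro t ht
    rw [mem_Ioi] at ht
    have hbt : 0 < (1-l)*α*t := mul_pos (mul_pos hl' hα) ht
    have hat : 0 < α*t := mul_pos hα ht
    have hlt : (1-l)*α*t < α*t := by nlinarith
    have hg := g_strictMonoOn (mem_Ioi.2 hbt) (mem_Ioi.2 hat) hlt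
    have hlogbt : Real.log ((1-l)*α*t) = Real.log (1-l) + Real.log (α*t) := by
      rw [show (1-l)*α*t = (1-l)*(α*t) by ring, Real.log_mul (ne_of_gt hl') (ne_of_gt hat)]
    have hD : (1-l)*α * psi ((1-l)*α*t) - α * psi (α*t) + l*α*Real.log (α*t)
        - (1-l)*α*Real.log (1-l) = (g ((1-l)*α*t) - g (α*t)) / t := by
      rw [g, g, hlogbt]
      field_simp
      ring
    rw [hD]
    apply div_neg_of_neg_of_pos _ ht
    linarith
  have hLanti : StrictAntiOn L (Set.Ioi 0) := by
    apply strictAntiOn_of_deriv_neg (convex_Ioi 0)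
    · intro t ht
      exact (L_hasDerivAt hl0 hl1 hα ht).continuousAt.continuousWithinAt
    · intro t ht
      rw [interior_Ioi] at ht
      rw [(L_hasDerivAt hl0 hl1 hα ht).deriv]
      exact hDneg t ht
  intro t1 h1 t2 h2 h12
  dsimp only
  rw [hfeq t1 h1, hfeq t2 h2]
  exact Real.exp_lt_exp.2 (hLanti h1 h2 h12)

end Stmt11

/-- For `λ ∈ (0,1)` and `α > 0`, the function
`C₀(t,λ) = (Γ((1-λ)αt)/Γ(αt)) (αt/e)^{λαt} (1-λ)^{-(1-λ)αt}` is (strictly) decreasing in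
`t` on `(0,∞)`. -/
theorem stmt11 (l α : ℝ) (hl : l ∈ Set.Ioo (0:ℝ) 1) (hα : 0 < α) :
    StrictAntiOn (fun t => Real.Gamma ((1-l)*α*t)/Real.Gamma (α*t)
        * (α*t/Real.exp 1) ^ (l*α*t) * (1-l) ^ (-((1-l)*α*t)))
      (Set.Ioi 0) := Stmt11.stmt11' l α hl hα
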